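/- If the graph G' contains C_6 as a contraction, then the graph G' − vx (obtained from G' by deleting the edge vx) contains P_6 as a contraction. -/

import Mathlib

/-- `W` is an `H`-witness structure of `G`: a family of pairwise disjoint nonempty
connected subsets of `V(G)` covering `V(G)` such that distinct `h₁ h₂` are adjacent in `H`
iff there is an edge of `G` between `W h₁` and `W h₂`. -/
def IsWitnessStructure {V U : Type*} (G : SimpleGraph V) (H : SimpleGraph U)
    (W : U → Set V) : Prop :=
  (∀ h, (W h).Nonempty) ∧
  (∀ h₁ h₂, h₁ ≠ h₂ → Disjoint (W h₁) (W h₂)) ∧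
  (⋃ h, W h) = Set.univ ∧
  (∀ h, (G.induce (W h)).Connected) ∧
  (∀ h₁ h₂, h₁ ≠ h₂ → ((∃ a ∈ W h₁, ∃ b ∈ W h₂, G.Adj a b) ↔ H.Adj h₁ h₂))

/-- `G` contains `H` as a contraction. -/
def ContainsAsContraction {V U : Type*} (G : SimpleGraph V) (H : SimpleGraph U) : Prop :=
  ∃ W : U → Set V, IsWitnessStructure G H W

/-- Raw vertex names for the graph `G'`: `G(Q,S)` with `q*` and `u₂` deleted and a new
vertex `x` added (adjacent to `v` and `w`). -/
inductive HVertex' (m n : ℕ) : Type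
  | elt : Fin m → HVertex' m n
  | hyp : Fin n → HVertex' m n
  | copy : Fin n → HVertex' m n
  | sub : Fin m → Fin n → HVertex' m n
  | u1 : HVertex' m n
  | x : HVertex' m n
  | v : HVertex' m n
  | w : HVertex' m n

/-- A raw vertex name is an actual vertex of `G'`: the subdivision vertex `q^i_j`
exists only when `q_i ∈ S_j`. -/
def HVertex'.OK {m n : ℕ} (S : Fin n → Set (Fin m)) : HVertex' m n → Prop
  | .sub i j => i ∈ S j
  | _ => True

/-- The vertex set of `G'`. -/
def GVertex' {m n : ℕ} (S : Fin n → Set (Fin m)) : Type := {y : HVertex' m n // y.OK S}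

/-- The (asymmetrically listed) edges of `G'`:
`q^i_j q_i`, `q^i_j S_j`, `q_i S_j'` (for `q_i ∈ S_j`), `S_j S_k'` (all `j,k`),
`u₁ S_j`, `u₁ v`, `x v`, `x w`, `w S_j'`. -/
def baseAdj' {m n : ℕ} (S : Fin n → Set (Fin m)) : HVertex' m n → HVertex' m n → Prop
  | .sub i _, .elt i' => i = i'
  | .sub _ j, .hyp j' => j = j'
  | .elt i, .copy j => i ∈ S j
  | .hyp _, .copy _ => True
  | .u1, .hyp _ => True
  | .u1, .v => True
  | .x, .v => True
  | .x, .w => True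
  | .w, .copy _ => True
  | _, _ => False

/-- The graph `G'`. -/
def GQS' {m n : ℕ} (S : Fin n → Set (Fin m)) : SimpleGraph (GVertex' S) :=
  SimpleGraph.fromRel (fun a b => baseAdj' S a.1 b.1)

namespace Stmt18
set_option linter.unusedSectionVars false

variable {m n : ℕ} {S : Fin n → Set (Fin m)}

/-- named vertices -/
def eltV (S : Fin n → Set (Fin m)) (i : Fin m) : GVertex' S := ⟨.elt i, trivial⟩
def hypV (S : Fin n → Set (Fin m)) (j : Fin n) : GVertex' S := ⟨.hyp j, trivial⟩
def copyV (S : Fin n → Set (Fin m)) (j : Fin n) : GVertex' S := ⟨.copy j, trivial⟩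
def subV (S : Fin n → Set (Fin m)) {i : Fin m} {j : Fin n} (hij : i ∈ S j) : GVertex' S :=
  ⟨.sub i j, hij⟩
def u1V (S : Fin n → Set (Fin m)) : GVertex' S := ⟨.u1, trivial⟩
def xV (S : Fin n → Set (Fin m)) : GVertex' S := ⟨.x, trivial⟩
def vV (S : Fin n → Set (Fin m)) : GVertex' S := ⟨.v, trivial⟩
def wV (S : Fin n → Set (Fin m)) : GVertex' S := ⟨.w, trivial⟩

lemma adj_iff {a b : GVertex' S} :
    (GQS' S).Adj a b ↔ a ≠ b ∧ (baseAdj' S a.1 b.1 ∨ baseAdj' S b.1 a.1) :=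
  SimpleGraph.fromRel_adj _ a b

/-- basic edges -/
lemma adj_u1_v : (GQS' S).Adj (u1V S) (vV S) := by
  rw [adj_iff]; exact ⟨by intro hc; exact HVertex'.noConfusion rfl rfl (heq_of_eq (congrArg Subtype.val hc)), Or.inl trivial⟩
lemma adj_v_x : (GQS' S).Adj (vV S) (xV S) := by
  rw [adj_iff]; exact ⟨by intro hc; exact HVertex'.noConfusion rfl rfl (heq_of_eq (congrArg Subtype.val hc)), Or.inr trivial⟩
lemma adj_x_w : (GQS' S).Adj (xV S) (wV S) := by
  rw [adj_iff]; exact ⟨by intro hc; exact HVertex'.noConfusion rfl rfl (heq_of_eq (congrArg Subtype.val hc)), Or.inl trivial⟩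
lemma adj_u1_hyp (j : Fin n) : (GQS' S).Adj (u1V S) (hypV S j) := by
  rw [adj_iff]; exact ⟨by intro hc; exact HVertex'.noConfusion rfl rfl (heq_of_eq (congrArg Subtype.val hc)), Or.inl trivial⟩
lemma adj_w_copy (j : Fin n) : (GQS' S).Adj (wV S) (copyV S j) := by
  rw [adj_iff]; exact ⟨by intro hc; exact HVertex'.noConfusion rfl rfl (heq_of_eq (congrArg Subtype.val hc)), Or.inl trivial⟩
lemma adj_hyp_copy (j k : Fin n) : (GQS' S).Adj (hypV S j) (copyV S k) := by
  rw [adj_iff]; exact ⟨by intro hc; exact HVertex'.noConfusion rfl rfl (heq_of_eq (congrArg Subtype.val hc)), Or.inl trivial⟩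
lemma adj_elt_copy {i : Fin m} {j : Fin n} (hij : i ∈ S j) :
    (GQS' S).Adj (eltV S i) (copyV S j) := by
  rw [adj_iff]; exact ⟨by intro hc; exact HVertex'.noConfusion rfl rfl (heq_of_eq (congrArg Subtype.val hc)), Or.inl hij⟩
lemma adj_sub_elt {i : Fin m} {j : Fin n} (hij : i ∈ S j) :
    (GQS' S).Adj (subV S hij) (eltV S i) := by
  rw [adj_iff]; exact ⟨by intro hc; exact HVertex'.noConfusion rfl rfl (heq_of_eq (congrArg Subtype.val hc)), Or.inl rfl⟩
lemma adj_sub_hyp {i : Fin m} {j : Fin n} (hij : i ∈ S j) :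
    (GQS' S).Adj (subV S hij) (hypV S j) := by
  rw [adj_iff]; exact ⟨by intro hc; exact HVertex'.noConfusion rfl rfl (heq_of_eq (congrArg Subtype.val hc)), Or.inl rfl⟩

/-- neighbor classification -/
lemma nbr_v {y : GVertex' S} (h : (GQS' S).Adj (vV S) y) : y = u1V S ∨ y = xV S := by
  obtain ⟨b, hb⟩ := y
  replace h := adj_iff.mp h
  obtain ⟨hne, h | h⟩ := h <;> cases b <;>
    simp_all [baseAdj', vV, u1V, xV] <;>
    first
      | exact Or.inl (Subtype.ext rfl)
      | exact Or.inr (Subtype.ext rfl)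

lemma nbr_x {y : GVertex' S} (h : (GQS' S).Adj (xV S) y) : y = vV S ∨ y = wV S := by
  obtain ⟨b, hb⟩ := y
  replace h := adj_iff.mp h
  obtain ⟨hne, h | h⟩ := h <;> cases b <;>
    first
      | exact False.elim h
      | exact Or.inl (Subtype.ext rfl)
      | exact Or.inr (Subtype.ext rfl)

lemma nbr_u1 {y : GVertex' S} (h : (GQS' S).Adj (u1V S) y) :
    y = vV S ∨ ∃ j, y = hypV S j := by
  obtain ⟨b, hb⟩ := y
  replace h := adj_iff.mp h
  obtain ⟨hne, h | h⟩ := h <;> cases b <;>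
    first
      | exact False.elim h
      | exact Or.inl (Subtype.ext rfl)
      | exact Or.inr ⟨_, Subtype.ext rfl⟩

lemma nbr_w {y : GVertex' S} (h : (GQS' S).Adj (wV S) y) :
    y = xV S ∨ ∃ j, y = copyV S j := by
  obtain ⟨b, hb⟩ := y
  replace h := adj_iff.mp h
  obtain ⟨hne, h | h⟩ := h <;> cases b <;>
    first
      | exact False.elim h
      | exact Or.inl (Subtype.ext rfl)
      | exact Or.inr ⟨_, Subtype.ext rfl⟩

lemma nbr_hyp {j : Fin n} {y : GVertex' S} (h : (GQS' S).Adj (hypV S j) y) :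
    y = u1V S ∨ (∃ k, y = copyV S k) ∨ (∃ i, ∃ hij : i ∈ S j, y = subV S hij) := by
  obtain ⟨b, hb⟩ := y
  replace h := adj_iff.mp h
  obtain ⟨hne, h | h⟩ := h <;> cases b <;>
    first
      | exact False.elim h
      | exact Or.inl (Subtype.ext rfl)
      | exact Or.inr (Or.inl ⟨_, Subtype.ext rfl⟩)
      | (cases h; exact Or.inr (Or.inr ⟨_, hb, Subtype.ext rfl⟩))

lemma nbr_copy {j : Fin n} {y : GVertex' S} (h : (GQS' S).Adj (copyV S j) y) :
    y = wV S ∨ (∃ k, y = hypV S k) ∨ (∃ i, i ∈ S j ∧ y = eltV S i) := by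
  obtain ⟨b, hb⟩ := y
  replace h := adj_iff.mp h
  obtain ⟨hne, h | h⟩ := h <;> cases b <;>
    first
      | exact False.elim h
      | exact Or.inl (Subtype.ext rfl)
      | exact Or.inr (Or.inl ⟨_, Subtype.ext rfl⟩)
      | exact Or.inr (Or.inr ⟨_, h, Subtype.ext rfl⟩)

lemma nbr_elt {i : Fin m} {y : GVertex' S} (h : (GQS' S).Adj (eltV S i) y) :
    (∃ j, ∃ hij : i ∈ S j, y = subV S hij) ∨ (∃ j, i ∈ S j ∧ y = copyV S j) := by
  obtain ⟨b, hb⟩ := y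
  replace h := adj_iff.mp h
  obtain ⟨hne, h | h⟩ := h <;> cases b <;>
    first
      | exact False.elim h
      | exact Or.inr ⟨_, h, Subtype.ext rfl⟩
      | (cases h; exact Or.inl ⟨_, hb, Subtype.ext rfl⟩)

lemma nbr_sub {i : Fin m} {j : Fin n} {hij : i ∈ S j} {y : GVertex' S}
    (h : (GQS' S).Adj (subV S hij) y) : y = eltV S i ∨ y = hypV S j := by
  obtain ⟨b, hb⟩ := y
  replace h := adj_iff.mp h
  obtain ⟨hne, h | h⟩ := h <;> cases b <;>
    first
      | exact False.elim h
      | (cases h; exact Or.inl (Subtype.ext rfl))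
      | (cases h; exact Or.inr (Subtype.ext rfl))

/-! ### Fin 6 cycle arithmetic -/

def Near (a b : Fin 6) : Prop := a = b ∨ a - b = 1 ∨ b - a = 1

instance : ∀ a b, Decidable (Near a b) := fun a b => by unfold Near; infer_instance

lemma cyc_adj {a b : Fin 6} : (SimpleGraph.cycleGraph 6).Adj a b ↔ (a - b = 1 ∨ b - a = 1) :=
  SimpleGraph.cycleGraph_adj (n := 4)

lemma near_symm {a b : Fin 6} (h : Near a b) : Near b a := by
  revert h; revert a b; decide

/-! ### crossing lemma -/

lemma crossing_walk {V : Type*} {G : SimpleGraph V} {s A : Set V} {u v : ↥s}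
    (p : (G.induce s).Walk u v) (hA : ↑u ∈ A) (hnA : ↑v ∉ A) :
    ∃ a ∈ s, a ∈ A ∧ ∃ b ∈ s, b ∉ A ∧ G.Adj a b := by
  induction p with
  | nil => exact absurd hA hnA
  | @cons a b c h p ih =>
      by_cases hb : ↑b ∈ A
      · exact ih hb hnA
      · exact ⟨a, a.2, hA, b, b.2, hb, h⟩

lemma crossing {V : Type*} {G : SimpleGraph V} {s A : Set V}
    (hconn : (G.induce s).Connected) {y0 y1 : V} (h0 : y0 ∈ s) (h0A : y0 ∈ A)
    (h1 : y1 ∈ s) (h1A : y1 ∉ A) :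
    ∃ a ∈ s, a ∈ A ∧ ∃ b ∈ s, b ∉ A ∧ G.Adj a b := by
  obtain ⟨p⟩ := hconn.preconnected ⟨y0, h0⟩ ⟨y1, h1⟩
  exact crossing_walk p h0A h1A

/-! ### witness structure basics -/

section Witness

variable {W : Fin 6 → Set (GVertex' S)}
  (hW : IsWitnessStructure (GQS' S) (SimpleGraph.cycleGraph 6) W)
  {φ : GVertex' S → Fin 6} (hφ : ∀ y, y ∈ W (φ y))

include hW hφ

lemma mem_part {y : GVertex' S} {h : Fin 6} (hy : y ∈ W h) : h = φ y := by
  by_contra hne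
  exact Set.disjoint_left.mp (hW.2.1 _ _ hne) hy (hφ y)

lemma adj_near {a b : GVertex' S} (h : (GQS' S).Adj a b) : Near (φ a) (φ b) := by
  by_cases he : φ a = φ b
  · exact Or.inl he
  · exact Or.inr (cyc_adj.mp ((hW.2.2.2.2 _ _ he).mp ⟨a, hφ a, b, hφ b, h⟩))

end Witness

lemma dZ : ∀ A B C D l : Fin 6, A ≠ B → C ≠ D → Near A C → Near A D → Near B C →
    Near B D → Near l C → Near l D → Near A l := by decide
lemma dW2 : ∀ z c : Fin 6, Near z c → Near (z+2) c → c = z+1 := by decide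
lemma dNe3 : ∀ z t s : Fin 6, Near z t → Near s t → s ≠ z+3 := by decide
lemma dN3 : ∀ z a : Fin 6, Near (z+3) a → a = z+2 ∨ a = z+3 ∨ a = z+4 := by decide
lemma dMemZ : ∀ z h : Fin 6, Near z h → h = z+5 ∨ h = z ∨ h = z+1 := by decide
lemma dA1 : ∀ z a h : Fin 6, Near (z+3) a → Near a h → Near z h → a = z+2 ∨ a = z+4 := by decide
lemma dA2 : ∀ z a h : Fin 6, Near (z+4) a → Near a h → Near z h → a = z+4 ∨ a = z+5 := by decide
lemma dH45 : ∀ z h : Fin 6, Near z h → Near (z+4) h → h = z+5 := by decide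
lemma dH5 : ∀ z h : Fin 6, Near z h → Near (z+5) h → h = z+5 ∨ h = z := by decide
lemma dSubZ : ∀ z s : Fin 6, Near s (z+5) → Near s (z+1) → s = z := by decide
lemma dCopyII : ∀ z c : Fin 6, Near z c → Near (z+5) c → Near (z+1) c → c = z := by decide
lemma dHC : ∀ z : Fin 6, ¬ Near (z+1) (z+5) := by decide
lemma dSub2 : ∀ z s h : Fin 6, Near s h → (h = z+5 ∨ h = z) → s ≠ z+2 := by decide
lemma dAddNe : ∀ (z a b : Fin 6), a ≠ b → z + a ≠ z + b := by decide
lemma dAddNe' : ∀ (z b : Fin 6), b ≠ 0 → z ≠ z + b := by decide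
lemma dNotZ2 : ∀ z h : Fin 6, Near z h → h ≠ z + 2 := by decide
lemma dE5 : ∀ z e : Fin 6, Near e (z+1) → e ≠ z+5 := by decide
lemma dE012 : ∀ z e : Fin 6, Near e (z+1) → e = z ∨ e = z+1 ∨ e = z+2 := by decide
lemma dNotZ4 : ∀ z h : Fin 6, Near z h → h ≠ z + 4 := by decide
lemma dRefl : ∀ z z' : Fin 6, Near z z' → Near z (z + z - z') := by decide
lemma dReflFix : ∀ z : Fin 6, z + z - (z+3) = z + 3 ∧ z + z - (z+4) = z+2 ∧ z + z - (z+2) = z+4 := by decide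
lemma dSubInj : ∀ a h1 h2 : Fin 6, a - h1 = a - h2 → h1 = h2 := by decide
lemma dRefl2 : ∀ z h : Fin 6, z + z - (z + z - h) = h := by decide
lemma dCycRefl : ∀ z h1 h2 : Fin 6,
    ((z + z - h1) - (z + z - h2) = 1 ∨ (z + z - h2) - (z + z - h1) = 1) ↔
      (h1 - h2 = 1 ∨ h2 - h1 = 1) := by decide

/-- injectivity helpers -/
lemma hypV_inj {j k : Fin n} (h : hypV S j = hypV S k) : j = k :=
  HVertex'.hyp.inj (congrArg Subtype.val h)
lemma copyV_inj {j k : Fin n} (h : copyV S j = copyV S k) : j = k :=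
  HVertex'.copy.inj (congrArg Subtype.val h)
lemma eltV_inj {i k : Fin m} (h : eltV S i = eltV S k) : i = k :=
  HVertex'.elt.inj (congrArg Subtype.val h)
lemma subV_inj {i i' : Fin m} {j j' : Fin n} {hij : i ∈ S j} {hij' : i' ∈ S j'}
    (h : subV S hij = subV S hij') : i = i' ∧ j = j' :=
  HVertex'.sub.inj (congrArg Subtype.val h)

section Main

variable (hn : 2 ≤ n) (hSne : ∀ j, (S j).Nonempty)
  (hSlast : S ⟨n - 1, Nat.sub_lt (by omega) Nat.one_pos⟩ = Set.univ)
  {W : Fin 6 → Set (GVertex' S)}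
  (hW : IsWitnessStructure (GQS' S) (SimpleGraph.cycleGraph 6) W)
  {φ : GVertex' S → Fin 6} (hφ : ∀ y, y ∈ W (φ y))

include hn hSne hSlast hW hφ

/-- Contradiction: all hyps in part z+5 with u1 at z+4, copies at z+1, elts near z+1. -/
lemma hypPart5_contra {z : Fin 6}
    (hc : ∀ j, φ (copyV S j) = z + 1)
    (helt1 : ∀ i, Near (φ (eltV S i)) (z + 1))
    (hh : ∀ j, φ (hypV S j) = z + 5) (hα : φ (u1V S) = z + 4) : False := by
  have hn0 : 0 < n := by omega
  set j0 : Fin n := ⟨0, by omega⟩ with hj0def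
  set j1 : Fin n := ⟨1, by omega⟩ with hj1def
  have hj01 : j0 ≠ j1 := by simp [hj0def, hj1def, Fin.ext_iff]
  obtain ⟨a, haW, haA, b, hbW, hbA, hab⟩ :=
    crossing (hW.2.2.2.1 (z+5)) (s := W (z+5))
      (A := {y | y = hypV S j0 ∨ ∃ i, ∃ hij : i ∈ S j0, y = subV S hij})
      ((hh j0) ▸ hφ _) (Or.inl rfl) ((hh j1) ▸ hφ _)
      (fun hcc => by
        rcases hcc with h' | ⟨i, hij, h'⟩
        · exact hj01 (hypV_inj h').symm
        · exact HVertex'.noConfusion rfl rfl (heq_of_eq (congrArg Subtype.val h')))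
  rcases haA with rfl | ⟨i, hij, rfl⟩
  · rcases nbr_hyp hab with rfl | ⟨k, rfl⟩ | ⟨i, hij, rfl⟩
    · exact dAddNe z 5 4 (by decide) ((mem_part hW hφ hbW).trans hα)
    · exact dAddNe z 5 1 (by decide) ((mem_part hW hφ hbW).trans (hc k))
    · exact hbA (Or.inr ⟨i, hij, rfl⟩)
  · rcases nbr_sub hab with rfl | rfl
    · exact dE5 z _ (helt1 i) ((mem_part hW hφ hbW).symm)
    · exact hbA (Or.inl rfl)

/-- The hard direction, oriented configuration: x in part z+3, w in part z+2. -/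
lemma lemmaI {z : Fin 6}
    (hz : ∀ j, Near z (φ (hypV S j)) ∧ Near z (φ (copyV S j)))
    (hγ : φ (xV S) = z + 3) (hδ : φ (wV S) = z + 2) :
    ∃ B : Set (Fin m), ∀ j, (∃ i ∈ S j, i ∈ B) ∧ (∃ i ∈ S j, i ∉ B) := by
  have hn0 : 0 < n := by omega
  set j0 : Fin n := ⟨0, by omega⟩ with hj0def
  set j1 : Fin n := ⟨1, by omega⟩ with hj1def
  set jl : Fin n := ⟨n - 1, by omega⟩ with hjldef
  have hj01 : j0 ≠ j1 := by simp [hj0def, hj1def, Fin.ext_iff]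
  have hmemlast : ∀ i : Fin m, i ∈ S jl := fun i => by rw [hjldef, hSlast]; trivial
  -- copies all in part z+1
  have hc : ∀ j, φ (copyV S j) = z + 1 := fun j =>
    dW2 z _ (hz j).2 (hδ ▸ adj_near hW hφ (adj_w_copy j))
  -- elts near z+1
  have helt1 : ∀ i, Near (φ (eltV S i)) (z + 1) := fun i =>
    (hc jl) ▸ adj_near hW hφ (adj_elt_copy (hmemlast i))
  -- v's part
  have hβn : Near (z + 3) (φ (vV S)) := near_symm (hγ ▸ adj_near hW hφ adj_v_x)
  have hβ2 : φ (vV S) ≠ z + 2 := by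
    intro hβ
    obtain ⟨a, haW, haA, b, hbW, hbA, hab⟩ :=
      crossing (hW.2.2.2.1 (z+2)) (s := W (z+2)) (A := {y | y = vV S ∨ y = u1V S})
        (hβ ▸ hφ (vV S)) (Or.inl rfl) (hδ ▸ hφ (wV S))
        (fun hc' => hc'.elim (fun h' => HVertex'.noConfusion rfl rfl (heq_of_eq (congrArg Subtype.val h')))
          (fun h' => HVertex'.noConfusion rfl rfl (heq_of_eq (congrArg Subtype.val h'))))
    rcases haA with rfl | rfl
    · rcases nbr_v hab with rfl | rfl
      · exact hbA (Or.inr rfl)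
      · exact dAddNe z 2 3 (by decide) ((mem_part hW hφ hbW).trans hγ)
    · rcases nbr_u1 hab with rfl | ⟨j, rfl⟩
      · exact hbA (Or.inl rfl)
      · exact dNotZ2 z _ (hz j).1 ((mem_part hW hφ hbW).symm)
  -- v is at z+3 or z+4
  rcases dN3 z _ hβn with hβ | hβ | hβ
  · exact absurd hβ hβ2
  · -- v at z+3 : impossible
    exfalso
    rcases dA1 z _ _ (hβ ▸ near_symm (adj_near hW hφ adj_u1_v))
      (adj_near hW hφ (adj_u1_hyp j0)) (hz j0).1 with hα | hα
    · -- u1 at z+2 with w : impossible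
      obtain ⟨a, haW, haA, b, hbW, hbA, hab⟩ :=
        crossing (hW.2.2.2.1 (z+2)) (s := W (z+2))
          (A := {y | y = u1V S ∨ ∃ j, y = hypV S j})
          (hα ▸ hφ _) (Or.inl rfl) (hδ ▸ hφ (wV S))
          (fun hcc => by
            rcases hcc with h' | ⟨j, h'⟩ <;>
              exact HVertex'.noConfusion rfl rfl (heq_of_eq (congrArg Subtype.val h')))
      rcases haA with rfl | ⟨j, rfl⟩
      · rcases nbr_u1 hab with rfl | ⟨j, rfl⟩
        · exact dAddNe z 2 3 (by decide) ((mem_part hW hφ hbW).trans hβ)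
        · exact hbA (Or.inr ⟨j, rfl⟩)
      · exact dNotZ2 z _ (hz j).1 (mem_part hW hφ haW).symm
    · -- u1 at z+4 : all hyps at z+5, contradiction
      exact hypPart5_contra hn hSne hSlast hW hφ hc helt1
        (fun j => dH45 z _ (hz j).1 (hα ▸ adj_near hW hφ (adj_u1_hyp j))) hα
  · -- v at z+4 : the real case
    rcases dA2 z _ _ (hβ ▸ near_symm (adj_near hW hφ adj_u1_v))
      (adj_near hW hφ (adj_u1_hyp j0)) (hz j0).1 with hα | hα
    · exact absurd (hypPart5_contra hn hSne hSlast hW hφ hc helt1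
        (fun j => dH45 z _ (hz j).1 (hα ▸ adj_near hW hφ (adj_u1_hyp j))) hα) id
    · -- u1 at z+5
      have hh5 : ∀ j, φ (hypV S j) = z+5 ∨ φ (hypV S j) = z := fun j =>
        dH5 z _ (hz j).1 (hα ▸ adj_near hW hφ (adj_u1_hyp j))
      have helt2 : ∀ i, φ (eltV S i) = z ∨ φ (eltV S i) = z+1 := by
        intro i
        rcases dE012 z _ (helt1 i) with h' | h' | h'
        · exact Or.inl h'
        · exact Or.inr h'
        · exfalso
          obtain ⟨a, haW, haA, b, hbW, hbA, hab⟩ :=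
            crossing (hW.2.2.2.1 (z+2)) (s := W (z+2)) (A := {y | y = eltV S i})
              (h' ▸ hφ _) rfl (hδ ▸ hφ (wV S))
              (fun hcc => HVertex'.noConfusion rfl rfl (heq_of_eq (congrArg Subtype.val hcc)))
          subst haA
          rcases nbr_elt hab with ⟨j, hij, rfl⟩ | ⟨j, hij, rfl⟩
          · exact dSub2 z _ _ (adj_near hW hφ (adj_sub_hyp hij)) (hh5 j)
              (mem_part hW hφ hbW).symm
          · exact dAddNe z 2 1 (by decide) ((mem_part hW hφ hbW).trans (hc j))
      refine ⟨{i | φ (eltV S i) = z}, fun j => ⟨?_, ?_⟩⟩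
      · -- B-claim
        by_contra hcon
        push_neg at hcon
        have hall : ∀ i ∈ S j, φ (eltV S i) = z + 1 := fun i hi =>
          (helt2 i).resolve_left (hcon i hi)
        have hj'ex : ∃ j', j' ≠ j := by
          by_cases hjj : j = j0
          · exact ⟨j1, by rw [hjj]; exact fun hcc => hj01 hcc.symm⟩
          · exact ⟨j0, fun hcc => hjj hcc.symm⟩
        obtain ⟨j', hj'⟩ := hj'ex
        rcases hh5 j with hj5 | hjz
        · -- hyp j at z+5
          obtain ⟨i, hij⟩ := hSne j
          have hsz : φ (subV S hij) = z := dSubZ z _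
            (hj5 ▸ adj_near hW hφ (adj_sub_hyp hij))
            ((hall i hij) ▸ adj_near hW hφ (adj_sub_elt hij))
          have hWz : ∀ y ∈ W z, y = subV S hij := by
            intro y1 hy1; by_contra hy1A
            obtain ⟨a, haW, haA, b, hbW, hbA, hab⟩ :=
              crossing (hW.2.2.2.1 z) (s := W z) (A := {y | y = subV S hij})
                (hsz ▸ hφ _) rfl hy1 hy1A
            subst haA
            rcases nbr_sub hab with rfl | rfl
            · exact dAddNe' z 1 (by decide) ((mem_part hW hφ hbW).trans (hall i hij))
            · exact dAddNe' z 5 (by decide) ((mem_part hW hφ hbW).trans hj5)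
          have hALLe : ∀ i', φ (eltV S i') = z+1 := by
            intro i'; rcases helt2 i' with h' | h'
            · exact absurd (hWz _ (h' ▸ hφ _))
                (fun hcc => HVertex'.noConfusion rfl rfl (heq_of_eq (congrArg Subtype.val hcc)))
            · exact h'
          have hALLh : ∀ j'', φ (hypV S j'') = z+5 := by
            intro j''; rcases hh5 j'' with h' | h'
            · exact h'
            · exact absurd (hWz _ (h' ▸ hφ _))
                (fun hcc => HVertex'.noConfusion rfl rfl (heq_of_eq (congrArg Subtype.val hcc)))
          obtain ⟨i', hi'⟩ := hSne j'
          have hs' : φ (subV S hi') = z := dSubZ z _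
            ((hALLh j') ▸ adj_near hW hφ (adj_sub_hyp hi'))
            ((hALLe i') ▸ adj_near hW hφ (adj_sub_elt hi'))
          exact hj' (subV_inj (hWz _ (hs' ▸ hφ _))).2
        · -- hyp j at z
          have hWz : ∀ y ∈ W z, y = hypV S j ∨ ∃ i, ∃ hij : i ∈ S j, y = subV S hij := by
            intro y1 hy1; by_contra hy1A
            obtain ⟨a, haW, haA, b, hbW, hbA, hab⟩ :=
              crossing (hW.2.2.2.1 z) (s := W z)
                (A := {y | y = hypV S j ∨ ∃ i, ∃ hij : i ∈ S j, y = subV S hij})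
                (hjz ▸ hφ _) (Or.inl rfl) hy1 hy1A
            rcases haA with rfl | ⟨i, hij, rfl⟩
            · rcases nbr_hyp hab with rfl | ⟨k, rfl⟩ | ⟨i, hij, rfl⟩
              · exact dAddNe' z 5 (by decide) ((mem_part hW hφ hbW).trans hα)
              · exact dAddNe' z 1 (by decide) ((mem_part hW hφ hbW).trans (hc k))
              · exact hbA (Or.inr ⟨i, hij, rfl⟩)
            · rcases nbr_sub hab with rfl | rfl
              · exact dAddNe' z 1 (by decide) ((mem_part hW hφ hbW).trans (hall i hij))
              · exact hbA (Or.inl rfl)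
          have hALLe : ∀ i', φ (eltV S i') = z+1 := by
            intro i'; rcases helt2 i' with h' | h'
            · rcases hWz _ (h' ▸ hφ _) with hcc | ⟨i2, hij2, hcc⟩ <;>
                exact HVertex'.noConfusion rfl rfl (heq_of_eq (congrArg Subtype.val hcc))
            · exact h'
          rcases hh5 j' with h5' | hz'
          · obtain ⟨i', hi'⟩ := hSne j'
            have hs' : φ (subV S hi') = z := dSubZ z _
              (h5' ▸ adj_near hW hφ (adj_sub_hyp hi'))
              ((hALLe i') ▸ adj_near hW hφ (adj_sub_elt hi'))
            rcases hWz _ (hs' ▸ hφ _) with hcc | ⟨i2, hij2, hcc⟩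
            · exact HVertex'.noConfusion rfl rfl (heq_of_eq (congrArg Subtype.val hcc))
            · exact hj' (subV_inj hcc).2
          · rcases hWz _ (hz' ▸ hφ _) with hcc | ⟨i2, hij2, hcc⟩
            · exact hj' (hypV_inj hcc)
            · exact HVertex'.noConfusion rfl rfl (heq_of_eq (congrArg Subtype.val hcc))
      · -- R-claim
        have hkex : ∃ k, k ≠ j := by
          by_cases hjj : j = j0
          · exact ⟨j1, by rw [hjj]; exact fun hcc => hj01 hcc.symm⟩
          · exact ⟨j0, fun hcc => hjj hcc.symm⟩
        obtain ⟨k, hkj⟩ := hkex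
        obtain ⟨a, haW, haA, b, hbW, hbA, hab⟩ :=
          crossing (hW.2.2.2.1 (z+1)) (s := W (z+1)) (A := {y | y = copyV S j})
            ((hc j) ▸ hφ _) rfl ((hc k) ▸ hφ _)
            (fun hcc => hkj (copyV_inj hcc))
        subst haA
        rcases nbr_copy hab with rfl | ⟨k', rfl⟩ | ⟨i, hij, rfl⟩
        · exact absurd ((mem_part hW hφ hbW).trans hδ) (dAddNe z 1 2 (by decide))
        · exfalso
          rcases hh5 k' with h' | h'
          · exact dAddNe z 1 5 (by decide) ((mem_part hW hφ hbW).trans h')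
          · exact dAddNe' z 1 (by decide) (((mem_part hW hφ hbW).trans h')).symm
        · exact ⟨i, hij, fun hB =>
            dAddNe' z 1 (by decide) (hB.symm.trans (mem_part hW hφ hbW).symm)⟩

/-- The hard direction, oriented configuration: v in part z+3, x in part z+4. -/
lemma lemmaII {z : Fin 6}
    (hz : ∀ j, Near z (φ (hypV S j)) ∧ Near z (φ (copyV S j)))
    (hβ : φ (vV S) = z + 3) (hγx : φ (xV S) = z + 4) :
    ∃ B : Set (Fin m), ∀ j, (∃ i ∈ S j, i ∈ B) ∧ (∃ i ∈ S j, i ∉ B) := by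
  have hn0 : 0 < n := by omega
  set j0 : Fin n := ⟨0, by omega⟩ with hj0def
  set j1 : Fin n := ⟨1, by omega⟩ with hj1def
  set jl : Fin n := ⟨n - 1, by omega⟩ with hjldef
  have hj01 : j0 ≠ j1 := by simp [hj0def, hj1def, Fin.ext_iff]
  have hmemlast : ∀ i : Fin m, i ∈ S jl := fun i => by rw [hjldef, hSlast]; trivial
  -- u1 at z+2
  have hα : φ (u1V S) = z + 2 := by
    rcases dA1 z _ _ (hβ ▸ near_symm (adj_near hW hφ adj_u1_v))
      (adj_near hW hφ (adj_u1_hyp j0)) (hz j0).1 with hα | hα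
    · exact hα
    · exfalso
      obtain ⟨a, haW, haA, b, hbW, hbA, hab⟩ :=
        crossing (hW.2.2.2.1 (z+4)) (s := W (z+4)) (A := {y | y = u1V S})
          (hα ▸ hφ _) rfl (hγx ▸ hφ (xV S))
          (fun hcc => HVertex'.noConfusion rfl rfl (heq_of_eq (congrArg Subtype.val hcc)))
      subst haA
      rcases nbr_u1 hab with rfl | ⟨j, rfl⟩
      · exact dAddNe z 4 3 (by decide) ((mem_part hW hφ hbW).trans hβ)
      · exact dNotZ4 z _ (hz j).1 (mem_part hW hφ hbW).symm
  -- hyps all at z+1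
  have hh : ∀ j, φ (hypV S j) = z + 1 := fun j =>
    dW2 z _ (hz j).1 (hα ▸ adj_near hW hφ (adj_u1_hyp j))
  -- w at z+5
  have hδ : φ (wV S) = z + 5 := by
    rcases dA2 z _ _ (hγx ▸ adj_near hW hφ adj_x_w)
      (adj_near hW hφ (adj_w_copy j0)) (hz j0).2 with hδ | hδ
    · exfalso
      have hc5 : ∀ j, φ (copyV S j) = z + 5 := fun j =>
        dH45 z _ (hz j).2 (hδ ▸ adj_near hW hφ (adj_w_copy j))
      exact dHC z ((hh j0) ▸ (hc5 j0) ▸ adj_near hW hφ (adj_hyp_copy j0 j0))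
    · exact hδ
  -- copies all at z
  have hcz : ∀ j, φ (copyV S j) = z := fun j =>
    dCopyII z _ (hz j).2 (hδ ▸ adj_near hW hφ (adj_w_copy j))
      ((hh j0) ▸ adj_near hW hφ (adj_hyp_copy j0 j))
  -- elts at z or z+1
  have helt1 : ∀ i, Near z (φ (eltV S i)) := fun i =>
    near_symm ((hcz jl) ▸ adj_near hW hφ (adj_elt_copy (hmemlast i)))
  have helt2 : ∀ i, φ (eltV S i) = z ∨ φ (eltV S i) = z + 1 := by
    intro i
    rcases dMemZ z _ (helt1 i) with h' | h' | h'
    · exfalso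
      obtain ⟨a, haW, haA, b, hbW, hbA, hab⟩ :=
        crossing (hW.2.2.2.1 (z+5)) (s := W (z+5)) (A := {y | y = eltV S i})
          (h' ▸ hφ _) rfl (hδ ▸ hφ (wV S))
          (fun hcc => HVertex'.noConfusion rfl rfl (heq_of_eq (congrArg Subtype.val hcc)))
      subst haA
      rcases nbr_elt hab with ⟨j, hij, rfl⟩ | ⟨j, hij, rfl⟩
      · exact dE5 z _ ((hh j) ▸ adj_near hW hφ (adj_sub_hyp hij))
          (mem_part hW hφ hbW).symm
      · exact dAddNe' z 5 (by decide) (((mem_part hW hφ hbW).trans (hcz j))).symm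
    · exact Or.inl h'
    · exact Or.inr h'
  refine ⟨{i | φ (eltV S i) = z + 1}, fun j => ⟨?_, ?_⟩⟩
  · -- B-claim
    by_contra hcon
    push_neg at hcon
    have hall : ∀ i ∈ S j, φ (eltV S i) = z := fun i hi =>
      (helt2 i).resolve_right (hcon i hi)
    have hj'ex : ∃ j', j' ≠ j := by
      by_cases hjj : j = j0
      · exact ⟨j1, by rw [hjj]; exact fun hcc => hj01 hcc.symm⟩
      · exact ⟨j0, fun hcc => hjj hcc.symm⟩
    obtain ⟨j', hj'⟩ := hj'ex
    have hWz1 : ∀ y ∈ W (z+1), y = hypV S j ∨ ∃ i, ∃ hij : i ∈ S j, y = subV S hij := by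
      intro y1 hy1; by_contra hy1A
      obtain ⟨a, haW, haA, b, hbW, hbA, hab⟩ :=
        crossing (hW.2.2.2.1 (z+1)) (s := W (z+1))
          (A := {y | y = hypV S j ∨ ∃ i, ∃ hij : i ∈ S j, y = subV S hij})
          ((hh j) ▸ hφ _) (Or.inl rfl) hy1 hy1A
      rcases haA with rfl | ⟨i, hij, rfl⟩
      · rcases nbr_hyp hab with rfl | ⟨k, rfl⟩ | ⟨i, hij, rfl⟩
        · exact dAddNe z 1 2 (by decide) ((mem_part hW hφ hbW).trans hα)
        · exact dAddNe' z 1 (by decide) (((mem_part hW hφ hbW).trans (hcz k))).symm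
        · exact hbA (Or.inr ⟨i, hij, rfl⟩)
      · rcases nbr_sub hab with rfl | rfl
        · exact dAddNe' z 1 (by decide) (((mem_part hW hφ hbW).trans (hall i hij))).symm
        · exact hbA (Or.inl rfl)
    rcases hWz1 _ ((hh j') ▸ hφ (hypV S j')) with hcc | ⟨i2, hij2, hcc⟩
    · exact hj' (hypV_inj hcc)
    · exact HVertex'.noConfusion rfl rfl (heq_of_eq (congrArg Subtype.val hcc))
  · -- R-claim
    have hkex : ∃ k, k ≠ j := by
      by_cases hjj : j = j0
      · exact ⟨j1, by rw [hjj]; exact fun hcc => hj01 hcc.symm⟩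
      · exact ⟨j0, fun hcc => hjj hcc.symm⟩
    obtain ⟨k, hkj⟩ := hkex
    obtain ⟨a, haW, haA, b, hbW, hbA, hab⟩ :=
      crossing (hW.2.2.2.1 z) (s := W z) (A := {y | y = copyV S j})
        ((hcz j) ▸ hφ _) rfl ((hcz k) ▸ hφ _)
        (fun hcc => hkj (copyV_inj hcc))
    subst haA
    rcases nbr_copy hab with rfl | ⟨k', rfl⟩ | ⟨i, hij, rfl⟩
    · exact absurd ((mem_part hW hφ hbW).trans hδ) (dAddNe' z 5 (by decide))
    · exact absurd ((mem_part hW hφ hbW).trans (hh k')) (dAddNe' z 1 (by decide))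
    · exact ⟨i, hij, fun hB =>
        dAddNe' z 1 (by decide) ((mem_part hW hφ hbW).trans hB)⟩

/-- Reflecting a witness structure through the cycle automorphism `h ↦ z+z-h`. -/
lemma witness_reflect (z : Fin 6) :
    IsWitnessStructure (GQS' S) (SimpleGraph.cycleGraph 6) (fun h => W (z + z - h)) := by
  obtain ⟨h1, h2, h3, h4, h5⟩ := hW
  refine ⟨fun h => h1 _, fun a b hab => h2 _ _ (fun hcc => hab (dSubInj _ _ _ hcc)), ?_, fun h => h4 _, ?_⟩
  · apply Set.eq_univ_iff_forall.mpr
    intro y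
    obtain ⟨h, hy⟩ := Set.mem_iUnion.mp (h3 ▸ Set.mem_univ y)
    exact Set.mem_iUnion.mpr ⟨z + z - h, by simpa [dRefl2 z h] using hy⟩
  · intro a b hab
    refine (h5 _ _ (fun hcc => hab (dSubInj _ _ _ hcc))).trans ?_
    rw [cyc_adj, cyc_adj]
    exact dCycRefl z a b

/-- From a C6 witness structure we extract a 2-coloring of the hypergraph. -/
lemma coloring : ∃ B : Set (Fin m), ∀ j, (∃ i ∈ S j, i ∈ B) ∧ (∃ i ∈ S j, i ∉ B) := by
  have hn0 : 0 < n := by omega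
  set j0 : Fin n := ⟨0, by omega⟩ with hj0def
  set jl : Fin n := ⟨n - 1, by omega⟩ with hjldef
  have hmemlast : ∀ i : Fin m, i ∈ S jl := fun i => by rw [hjldef, hSlast]; trivial
  have F1 : ∀ j k, Near (φ (hypV S j)) (φ (copyV S k)) := fun j k =>
    adj_near hW hφ (adj_hyp_copy j k)
  obtain ⟨z, hz⟩ : ∃ z, ∀ j, Near z (φ (hypV S j)) ∧ Near z (φ (copyV S j)) := by
    by_cases hH : ∀ j, φ (hypV S j) = φ (hypV S j0)
    · exact ⟨φ (hypV S j0), fun j => ⟨Or.inl (hH j).symm, F1 j0 j⟩⟩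
    · push_neg at hH; obtain ⟨ja, hja⟩ := hH
      by_cases hC : ∀ j, φ (copyV S j) = φ (copyV S j0)
      · exact ⟨φ (copyV S j0), fun j => ⟨near_symm (F1 j j0), Or.inl (hC j).symm⟩⟩
      · push_neg at hC; obtain ⟨ka, hka⟩ := hC
        exact ⟨φ (hypV S j0), fun j =>
          ⟨dZ _ _ _ _ _ (Ne.symm hja) (Ne.symm hka) (F1 j0 j0) (F1 j0 ka) (F1 ja j0)
            (F1 ja ka) (F1 j j0) (F1 j ka), F1 j0 j⟩⟩
  have hfar : ∀ y : GVertex' S, φ y = z + 3 → y = vV S ∨ y = xV S := by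
    rintro ⟨b, hb⟩ hyz
    cases b with
    | elt i =>
        exact absurd hyz (dNe3 z _ _ (hz jl).2 (adj_near hW hφ (adj_elt_copy (hmemlast i))))
    | hyp j =>
        exact absurd hyz (dNe3 z _ _ (hz j).1 (Or.inl rfl))
    | copy j =>
        exact absurd hyz (dNe3 z _ _ (hz j).2 (Or.inl rfl))
    | sub i j =>
        exact absurd hyz (dNe3 z _ _ (hz j).1 (adj_near hW hφ (adj_sub_hyp hb)))
    | u1 =>
        exact absurd hyz (dNe3 z _ _ (hz j0).1 (adj_near hW hφ (adj_u1_hyp j0)))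
    | x => exact Or.inr (Subtype.ext rfl)
    | v => exact Or.inl (Subtype.ext rfl)
    | w =>
        exact absurd hyz (dNe3 z _ _ (hz j0).2 (adj_near hW hφ (adj_w_copy j0)))
  by_cases hγ : φ (xV S) = z + 3
  · rcases dN3 z _ (hγ ▸ adj_near hW hφ adj_x_w) with hδ | hδ | hδ
    · exact lemmaI hn hSne hSlast hW hφ hz hγ hδ
    · exact absurd hδ (dNe3 z _ _ (hz j0).2 (adj_near hW hφ (adj_w_copy j0)))
    · refine lemmaI hn hSne hSlast (witness_reflect hn hSne hSlast hW hφ z) (φ := fun y => z + z - φ y)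
        (fun y => by show y ∈ W (z + z - (z + z - φ y)); rw [dRefl2 z (φ y)]; exact hφ y)
        (fun j => ⟨dRefl z _ (hz j).1, dRefl z _ (hz j).2⟩) ?_ ?_
      · show z + z - φ (xV S) = z + 3
        rw [hγ]; exact (dReflFix z).1
      · show z + z - φ (wV S) = z + 2
        rw [hδ]; exact (dReflFix z).2.1
  · obtain ⟨y, hy⟩ := hW.1 (z + 3)
    have hyz := (mem_part hW hφ hy).symm
    rcases hfar y hyz with rfl | rfl
    · rcases dN3 z _ (hyz ▸ adj_near hW hφ adj_v_x) with hγ2 | hγ2 | hγ2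
      · refine lemmaII hn hSne hSlast (witness_reflect hn hSne hSlast hW hφ z) (φ := fun y => z + z - φ y)
          (fun y => by show y ∈ W (z + z - (z + z - φ y)); rw [dRefl2 z (φ y)]; exact hφ y)
          (fun j => ⟨dRefl z _ (hz j).1, dRefl z _ (hz j).2⟩) ?_ ?_
        · show z + z - φ (vV S) = z + 3
          rw [hyz]; exact (dReflFix z).1
        · show z + z - φ (xV S) = z + 4
          rw [hγ2]; exact (dReflFix z).2.2
      · exact absurd hγ2 hγ
      · exact lemmaII hn hSne hSlast hW hφ hz hyz hγ2
    · exact absurd hyz hγ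

end Main

/-! ### Part B : from a 2-coloring to a P6 contraction of G' - vx -/

section PartB

variable (B : Set (Fin m)) [DecidablePred (· ∈ B)]

/-- classifier of the P6 witness structure -/
def fB : GVertex' S → Fin 6 := fun y =>
  match y.1 with
  | .v => 0
  | .u1 => 1
  | .hyp _ => 2
  | .elt i => if i ∈ B then 2 else 3
  | .sub i _ => if i ∈ B then 2 else 3
  | .copy _ => 3
  | .w => 4
  | .x => 5

variable {B}

lemma fB_elt {i : Fin m} : fB B (eltV S i) = if i ∈ B then 2 else 3 := rfl
lemma fB_sub {i : Fin m} {j : Fin n} {hij : i ∈ S j} :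
    fB B (subV S hij) = if i ∈ B then 2 else 3 := rfl

lemma fB_cases0 {y : GVertex' S} (h : fB B y = 0) : y = vV S := by
  obtain ⟨b, hb⟩ := y
  cases b with
  | v => exact Subtype.ext rfl
  | elt i =>
      by_cases hiB : i ∈ B
      · rw [show fB B ⟨HVertex'.elt i, hb⟩ = if i ∈ B then 2 else 3 from rfl, if_pos hiB] at h
        exact absurd h (by decide : (2 : Fin 6) ≠ 0)
      · rw [show fB B ⟨HVertex'.elt i, hb⟩ = if i ∈ B then 2 else 3 from rfl, if_neg hiB] at h
        exact absurd h (by decide : (3 : Fin 6) ≠ 0)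
  | sub i j =>
      by_cases hiB : i ∈ B
      · rw [show fB B ⟨HVertex'.sub i j, hb⟩ = if i ∈ B then 2 else 3 from rfl, if_pos hiB] at h
        exact absurd h (by decide : (2 : Fin 6) ≠ 0)
      · rw [show fB B ⟨HVertex'.sub i j, hb⟩ = if i ∈ B then 2 else 3 from rfl, if_neg hiB] at h
        exact absurd h (by decide : (3 : Fin 6) ≠ 0)
  | hyp j => exact absurd h (by decide : (2 : Fin 6) ≠ 0)
  | copy j => exact absurd h (by decide : (3 : Fin 6) ≠ 0)
  | u1 => exact absurd h (by decide : (1 : Fin 6) ≠ 0)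
  | x => exact absurd h (by decide : (5 : Fin 6) ≠ 0)
  | w => exact absurd h (by decide : (4 : Fin 6) ≠ 0)

lemma fB_cases1 {y : GVertex' S} (h : fB B y = 1) :
    y = u1V S := by
  obtain ⟨b, hb⟩ := y
  cases b with
  | v => exact absurd h (by decide : ((0) : Fin 6) ≠ 1)
  | elt i =>
      by_cases hiB : i ∈ B
      · rw [show fB B ⟨HVertex'.elt i, hb⟩ = if i ∈ B then 2 else 3 from rfl, if_pos hiB] at h
        exact absurd h (by decide : ((2) : Fin 6) ≠ 1)
      · rw [show fB B ⟨HVertex'.elt i, hb⟩ = if i ∈ B then 2 else 3 from rfl, if_neg hiB] at h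
        exact absurd h (by decide : ((3) : Fin 6) ≠ 1)
  | sub i j =>
      by_cases hiB : i ∈ B
      · rw [show fB B ⟨HVertex'.sub i j, hb⟩ = if i ∈ B then 2 else 3 from rfl, if_pos hiB] at h
        exact absurd h (by decide : ((2) : Fin 6) ≠ 1)
      · rw [show fB B ⟨HVertex'.sub i j, hb⟩ = if i ∈ B then 2 else 3 from rfl, if_neg hiB] at h
        exact absurd h (by decide : ((3) : Fin 6) ≠ 1)
  | hyp j => exact absurd h (by decide : ((2) : Fin 6) ≠ 1)
  | copy j => exact absurd h (by decide : ((3) : Fin 6) ≠ 1)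
  | u1 => exact Subtype.ext rfl
  | x => exact absurd h (by decide : ((5) : Fin 6) ≠ 1)
  | w => exact absurd h (by decide : ((4) : Fin 6) ≠ 1)


lemma fB_cases4 {y : GVertex' S} (h : fB B y = 4) :
    y = wV S := by
  obtain ⟨b, hb⟩ := y
  cases b with
  | v => exact absurd h (by decide : ((0) : Fin 6) ≠ 4)
  | elt i =>
      by_cases hiB : i ∈ B
      · rw [show fB B ⟨HVertex'.elt i, hb⟩ = if i ∈ B then 2 else 3 from rfl, if_pos hiB] at h
        exact absurd h (by decide : ((2) : Fin 6) ≠ 4)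
      · rw [show fB B ⟨HVertex'.elt i, hb⟩ = if i ∈ B then 2 else 3 from rfl, if_neg hiB] at h
        exact absurd h (by decide : ((3) : Fin 6) ≠ 4)
  | sub i j =>
      by_cases hiB : i ∈ B
      · rw [show fB B ⟨HVertex'.sub i j, hb⟩ = if i ∈ B then 2 else 3 from rfl, if_pos hiB] at h
        exact absurd h (by decide : ((2) : Fin 6) ≠ 4)
      · rw [show fB B ⟨HVertex'.sub i j, hb⟩ = if i ∈ B then 2 else 3 from rfl, if_neg hiB] at h
        exact absurd h (by decide : ((3) : Fin 6) ≠ 4)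
  | hyp j => exact absurd h (by decide : ((2) : Fin 6) ≠ 4)
  | copy j => exact absurd h (by decide : ((3) : Fin 6) ≠ 4)
  | u1 => exact absurd h (by decide : ((1) : Fin 6) ≠ 4)
  | x => exact absurd h (by decide : ((5) : Fin 6) ≠ 4)
  | w => exact Subtype.ext rfl


lemma fB_cases5 {y : GVertex' S} (h : fB B y = 5) :
    y = xV S := by
  obtain ⟨b, hb⟩ := y
  cases b with
  | v => exact absurd h (by decide : ((0) : Fin 6) ≠ 5)
  | elt i =>
      by_cases hiB : i ∈ B
      · rw [show fB B ⟨HVertex'.elt i, hb⟩ = if i ∈ B then 2 else 3 from rfl, if_pos hiB] at h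
        exact absurd h (by decide : ((2) : Fin 6) ≠ 5)
      · rw [show fB B ⟨HVertex'.elt i, hb⟩ = if i ∈ B then 2 else 3 from rfl, if_neg hiB] at h
        exact absurd h (by decide : ((3) : Fin 6) ≠ 5)
  | sub i j =>
      by_cases hiB : i ∈ B
      · rw [show fB B ⟨HVertex'.sub i j, hb⟩ = if i ∈ B then 2 else 3 from rfl, if_pos hiB] at h
        exact absurd h (by decide : ((2) : Fin 6) ≠ 5)
      · rw [show fB B ⟨HVertex'.sub i j, hb⟩ = if i ∈ B then 2 else 3 from rfl, if_neg hiB] at h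
        exact absurd h (by decide : ((3) : Fin 6) ≠ 5)
  | hyp j => exact absurd h (by decide : ((2) : Fin 6) ≠ 5)
  | copy j => exact absurd h (by decide : ((3) : Fin 6) ≠ 5)
  | u1 => exact absurd h (by decide : ((1) : Fin 6) ≠ 5)
  | x => exact Subtype.ext rfl
  | w => exact absurd h (by decide : ((4) : Fin 6) ≠ 5)


lemma fB_cases2 {y : GVertex' S} (h : fB B y = 2) :
    (∃ j, y = hypV S j) ∨ (∃ i, i ∈ B ∧ y = eltV S i) ∨
      (∃ i, ∃ j, ∃ hij : i ∈ S j, i ∈ B ∧ y = subV S hij) := by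
  obtain ⟨b, hb⟩ := y
  cases b with
  | v => exact absurd h (by decide : ((0) : Fin 6) ≠ 2)
  | elt i =>
      by_cases hiB : i ∈ B
      · rw [show fB B ⟨HVertex'.elt i, hb⟩ = if i ∈ B then 2 else 3 from rfl, if_pos hiB] at h
        exact Or.inr (Or.inl ⟨i, hiB, Subtype.ext rfl⟩)
      · rw [show fB B ⟨HVertex'.elt i, hb⟩ = if i ∈ B then 2 else 3 from rfl, if_neg hiB] at h
        exact absurd h (by decide : ((3) : Fin 6) ≠ 2)
  | sub i j =>
      by_cases hiB : i ∈ B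
      · rw [show fB B ⟨HVertex'.sub i j, hb⟩ = if i ∈ B then 2 else 3 from rfl, if_pos hiB] at h
        exact Or.inr (Or.inr ⟨i, j, hb, hiB, Subtype.ext rfl⟩)
      · rw [show fB B ⟨HVertex'.sub i j, hb⟩ = if i ∈ B then 2 else 3 from rfl, if_neg hiB] at h
        exact absurd h (by decide : ((3) : Fin 6) ≠ 2)
  | hyp j => exact Or.inl ⟨j, Subtype.ext rfl⟩
  | copy j => exact absurd h (by decide : ((3) : Fin 6) ≠ 2)
  | u1 => exact absurd h (by decide : ((1) : Fin 6) ≠ 2)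
  | x => exact absurd h (by decide : ((5) : Fin 6) ≠ 2)
  | w => exact absurd h (by decide : ((4) : Fin 6) ≠ 2)


lemma fB_cases3 {y : GVertex' S} (h : fB B y = 3) :
    (∃ j, y = copyV S j) ∨ (∃ i, i ∉ B ∧ y = eltV S i) ∨
      (∃ i, ∃ j, ∃ hij : i ∈ S j, i ∉ B ∧ y = subV S hij) := by
  obtain ⟨b, hb⟩ := y
  cases b with
  | v => exact absurd h (by decide : ((0) : Fin 6) ≠ 3)
  | elt i =>
      by_cases hiB : i ∈ B
      · rw [show fB B ⟨HVertex'.elt i, hb⟩ = if i ∈ B then 2 else 3 from rfl, if_pos hiB] at h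
        exact absurd h (by decide : ((2) : Fin 6) ≠ 3)
      · rw [show fB B ⟨HVertex'.elt i, hb⟩ = if i ∈ B then 2 else 3 from rfl, if_neg hiB] at h
        exact Or.inr (Or.inl ⟨i, hiB, Subtype.ext rfl⟩)
  | sub i j =>
      by_cases hiB : i ∈ B
      · rw [show fB B ⟨HVertex'.sub i j, hb⟩ = if i ∈ B then 2 else 3 from rfl, if_pos hiB] at h
        exact absurd h (by decide : ((2) : Fin 6) ≠ 3)
      · rw [show fB B ⟨HVertex'.sub i j, hb⟩ = if i ∈ B then 2 else 3 from rfl, if_neg hiB] at h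
        exact Or.inr (Or.inr ⟨i, j, hb, hiB, Subtype.ext rfl⟩)
  | hyp j => exact absurd h (by decide : ((2) : Fin 6) ≠ 3)
  | copy j => exact Or.inl ⟨j, Subtype.ext rfl⟩
  | u1 => exact absurd h (by decide : ((1) : Fin 6) ≠ 3)
  | x => exact absurd h (by decide : ((5) : Fin 6) ≠ 3)
  | w => exact absurd h (by decide : ((4) : Fin 6) ≠ 3)





/-- edges surviving in G' - vx -/
lemma del_adj {a b : GVertex' S} (h : (GQS' S).Adj a b)
    (hne : s(a, b) ≠ s(vV S, xV S)) :
    ((GQS' S).deleteEdges {s(vV S, xV S)}).Adj a b := by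
  rw [SimpleGraph.deleteEdges_adj]
  exact ⟨h, hne⟩

lemma sym2_ne {a b : GVertex' S}
    (h1 : a.1 ≠ HVertex'.v ∨ b.1 ≠ HVertex'.x) (h2 : a.1 ≠ HVertex'.x ∨ b.1 ≠ HVertex'.v) :
    s(a, b) ≠ s(vV S, xV S) := by
  intro hc
  rcases Sym2.eq_iff.mp hc with ⟨e1, e2⟩ | ⟨e1, e2⟩
  · rcases h1 with h | h
    · exact h (congrArg Subtype.val e1)
    · exact h (congrArg Subtype.val e2)
  · rcases h2 with h | h
    · exact h (congrArg Subtype.val e1)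
    · exact h (congrArg Subtype.val e2)

lemma reach_step {V : Type*} {G : SimpleGraph V} {s : Set V} {a b : V} (ha : a ∈ s) (hb : b ∈ s)
    (hab : G.Adj a b) : (G.induce s).Reachable ⟨a, ha⟩ ⟨b, hb⟩ :=
  SimpleGraph.Adj.reachable (by exact hab)

lemma induce_connected_hub {V : Type*} {G : SimpleGraph V} {s : Set V} (c : V) (hc : c ∈ s)
    (h : ∀ y (hy : y ∈ s), (G.induce s).Reachable ⟨y, hy⟩ ⟨c, hc⟩) :
    (G.induce s).Connected := by
  rw [SimpleGraph.connected_iff]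
  exact ⟨fun a b => (h a.1 a.2).trans (h b.1 b.2).symm, ⟨⟨c, hc⟩⟩⟩

lemma keyAdj {a b : GVertex' S}
    (hab : ((GQS' S).deleteEdges {s(vV S, xV S)}).Adj a b) :
    (SimpleGraph.pathGraph 6).Adj (fB B a) (fB B b) ∨ fB B a = fB B b := by
  rw [SimpleGraph.deleteEdges_adj] at hab
  obtain ⟨hab, hvx⟩ := hab
  have pa : ∀ {p q : Fin 6}, (p.val + 1 = q.val ∨ q.val + 1 = p.val) →
      (SimpleGraph.pathGraph 6).Adj p q := fun h => (SimpleGraph.pathGraph_adj).mpr h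
  obtain ⟨ba, hba⟩ := a
  cases ba with
  | v =>
      rcases nbr_v hab with rfl | rfl
      · exact Or.inl (pa (Or.inl rfl))
      · exact absurd rfl hvx
  | u1 =>
      rcases nbr_u1 hab with rfl | ⟨j, rfl⟩
      · exact Or.inl (pa (Or.inr rfl))
      · exact Or.inl (pa (Or.inl rfl))
  | x =>
      rcases nbr_x hab with rfl | rfl
      · exact absurd Sym2.eq_swap hvx
      · exact Or.inl (pa (Or.inr rfl))
  | w =>
      rcases nbr_w hab with rfl | ⟨j, rfl⟩
      · exact Or.inl (pa (Or.inl rfl))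
      · exact Or.inl (pa (Or.inr rfl))
  | hyp j =>
      rcases nbr_hyp hab with rfl | ⟨k, rfl⟩ | ⟨i, hij, rfl⟩
      · exact Or.inl (pa (Or.inr rfl))
      · exact Or.inl (pa (Or.inl rfl))
      · by_cases hiB : i ∈ B
        · refine Or.inr ?_
          have h2 : fB B (subV S hij) = 2 := by
            show (if i ∈ B then (2 : Fin 6) else 3) = 2
            rw [if_pos hiB]
          rw [h2]; rfl
        · have h3 : fB B (subV S hij) = 3 := by
            show (if i ∈ B then (2 : Fin 6) else 3) = 3
            rw [if_neg hiB]
          rw [h3]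
          exact Or.inl (pa (Or.inl rfl))
  | copy j =>
      rcases nbr_copy hab with rfl | ⟨k, rfl⟩ | ⟨i, hij, rfl⟩
      · exact Or.inl (pa (Or.inl rfl))
      · exact Or.inl (pa (Or.inr rfl))
      · by_cases hiB : i ∈ B
        · have h2 : fB B (eltV S i) = 2 := by
            show (if i ∈ B then (2 : Fin 6) else 3) = 2
            rw [if_pos hiB]
          rw [h2]
          exact Or.inl (pa (Or.inr rfl))
        · refine Or.inr ?_
          have h3 : fB B (eltV S i) = 3 := by
            show (if i ∈ B then (2 : Fin 6) else 3) = 3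
            rw [if_neg hiB]
          rw [h3]; rfl
  | elt i =>
      rcases nbr_elt hab with ⟨j, hij, rfl⟩ | ⟨j, hij, rfl⟩
      · exact Or.inr rfl
      · by_cases hiB : i ∈ B
        · have h2 : fB B ⟨HVertex'.elt i, hba⟩ = 2 := by
            show (if i ∈ B then (2 : Fin 6) else 3) = 2
            rw [if_pos hiB]
          rw [h2]
          exact Or.inl (pa (Or.inl rfl))
        · refine Or.inr ?_
          have h3 : fB B ⟨HVertex'.elt i, hba⟩ = 3 := by
            show (if i ∈ B then (2 : Fin 6) else 3) = 3
            rw [if_neg hiB]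
          rw [h3]; rfl
  | sub i j =>
      rcases nbr_sub hab with rfl | rfl
      · exact Or.inr rfl
      · by_cases hiB : i ∈ B
        · refine Or.inr ?_
          have h2 : fB B ⟨HVertex'.sub i j, hba⟩ = 2 := by
            show (if i ∈ B then (2 : Fin 6) else 3) = 2
            rw [if_pos hiB]
          rw [h2]; rfl
        · have h3 : fB B ⟨HVertex'.sub i j, hba⟩ = 3 := by
            show (if i ∈ B then (2 : Fin 6) else 3) = 3
            rw [if_neg hiB]
          rw [h3]
          exact Or.inl (pa (Or.inr rfl))

lemma lemmaB (hn : 2 ≤ n) (hSne : ∀ j, (S j).Nonempty)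
    (hSlast : S ⟨n - 1, Nat.sub_lt (by omega) Nat.one_pos⟩ = Set.univ)
    (hB : ∀ j, (∃ i ∈ S j, i ∈ B) ∧ (∃ i ∈ S j, i ∉ B)) :
    ContainsAsContraction ((GQS' S).deleteEdges {s(vV S, xV S)})
      (SimpleGraph.pathGraph 6) := by
  have hn0 : 0 < n := by omega
  set j0 : Fin n := ⟨0, by omega⟩ with hj0def
  set jl : Fin n := ⟨n - 1, by omega⟩ with hjldef
  have hmemlast : ∀ i : Fin m, i ∈ S jl := fun i => by rw [hjldef, hSlast]; trivial
  -- surviving edges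
  have e_u1v : ((GQS' S).deleteEdges {s(vV S, xV S)}).Adj (u1V S) (vV S) :=
    del_adj adj_u1_v (sym2_ne (Or.inl (fun hc => HVertex'.noConfusion rfl rfl (heq_of_eq hc)))
      (Or.inl (fun hc => HVertex'.noConfusion rfl rfl (heq_of_eq hc))))
  have e_u1hyp : ∀ j, ((GQS' S).deleteEdges {s(vV S, xV S)}).Adj (u1V S) (hypV S j) :=
    fun j => del_adj (adj_u1_hyp j) (sym2_ne (Or.inl (fun hc => HVertex'.noConfusion rfl rfl (heq_of_eq hc)))
      (Or.inl (fun hc => HVertex'.noConfusion rfl rfl (heq_of_eq hc))))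
  have e_hypcopy : ∀ j k, ((GQS' S).deleteEdges {s(vV S, xV S)}).Adj (hypV S j) (copyV S k) :=
    fun j k => del_adj (adj_hyp_copy j k) (sym2_ne (Or.inl (fun hc => HVertex'.noConfusion rfl rfl (heq_of_eq hc)))
      (Or.inl (fun hc => HVertex'.noConfusion rfl rfl (heq_of_eq hc))))
  have e_wcopy : ∀ j, ((GQS' S).deleteEdges {s(vV S, xV S)}).Adj (wV S) (copyV S j) :=
    fun j => del_adj (adj_w_copy j) (sym2_ne (Or.inl (fun hc => HVertex'.noConfusion rfl rfl (heq_of_eq hc)))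
      (Or.inl (fun hc => HVertex'.noConfusion rfl rfl (heq_of_eq hc))))
  have e_xw : ((GQS' S).deleteEdges {s(vV S, xV S)}).Adj (xV S) (wV S) :=
    del_adj adj_x_w (sym2_ne (Or.inl (fun hc => HVertex'.noConfusion rfl rfl (heq_of_eq hc)))
      (Or.inr (fun hc => HVertex'.noConfusion rfl rfl (heq_of_eq hc))))
  have e_eltcopy : ∀ {i j} (hij : i ∈ S j),
      ((GQS' S).deleteEdges {s(vV S, xV S)}).Adj (eltV S i) (copyV S j) :=
    fun hij => del_adj (adj_elt_copy hij) (sym2_ne (Or.inl (fun hc => HVertex'.noConfusion rfl rfl (heq_of_eq hc)))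
      (Or.inl (fun hc => HVertex'.noConfusion rfl rfl (heq_of_eq hc))))
  have e_subelt : ∀ {i j} (hij : i ∈ S j),
      ((GQS' S).deleteEdges {s(vV S, xV S)}).Adj (subV S hij) (eltV S i) :=
    fun hij => del_adj (adj_sub_elt hij) (sym2_ne (Or.inl (fun hc => HVertex'.noConfusion rfl rfl (heq_of_eq hc)))
      (Or.inl (fun hc => HVertex'.noConfusion rfl rfl (heq_of_eq hc))))
  have e_subhyp : ∀ {i j} (hij : i ∈ S j),
      ((GQS' S).deleteEdges {s(vV S, xV S)}).Adj (subV S hij) (hypV S j) :=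
    fun hij => del_adj (adj_sub_hyp hij) (sym2_ne (Or.inl (fun hc => HVertex'.noConfusion rfl rfl (heq_of_eq hc)))
      (Or.inl (fun hc => HVertex'.noConfusion rfl rfl (heq_of_eq hc))))
  -- membership helpers
  have mE : ∀ {i : Fin m}, i ∈ B → fB B (eltV S i) = 2 := fun hiB => by
    rw [fB_elt, if_pos hiB]
  have mE' : ∀ {i : Fin m}, i ∉ B → fB B (eltV S i) = 3 := fun hiB => by
    rw [fB_elt, if_neg hiB]
  have mS : ∀ {i j} (hij : i ∈ S j), i ∈ B → fB B (subV S hij) = 2 := fun hij hiB => by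
    rw [fB_sub, if_pos hiB]
  have mS' : ∀ {i j} (hij : i ∈ S j), i ∉ B → fB B (subV S hij) = 3 := fun hij hiB => by
    rw [fB_sub, if_neg hiB]
  have rs2 : ∀ {a b : GVertex' S} (ha : fB B a = 2) (hb : fB B b = 2),
      ((GQS' S).deleteEdges {s(vV S, xV S)}).Adj a b →
      (((GQS' S).deleteEdges {s(vV S, xV S)}).induce {y | fB B y = 2}).Reachable
        ⟨a, ha⟩ ⟨b, hb⟩ :=
    fun ha hb hab => reach_step (s := {y | fB B y = 2}) ha hb hab
  have rs3 : ∀ {a b : GVertex' S} (ha : fB B a = 3) (hb : fB B b = 3),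
      ((GQS' S).deleteEdges {s(vV S, xV S)}).Adj a b →
      (((GQS' S).deleteEdges {s(vV S, xV S)}).induce {y | fB B y = 3}).Reachable
        ⟨a, ha⟩ ⟨b, hb⟩ :=
    fun ha hb hab => reach_step (s := {y | fB B y = 3}) ha hb hab
  refine ⟨fun h => {y | fB B y = h}, ?_, fun h1 h2 hne =>
    Set.disjoint_left.mpr (fun a ha1 ha2 => hne (Eq.trans (Eq.symm ha1) ha2)), ?_, ?_,
    fun h1 h2 hne => ⟨?_, ?_⟩⟩
  · intro h
    fin_cases h
    · exact ⟨vV S, rfl⟩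
    · exact ⟨u1V S, rfl⟩
    · exact ⟨hypV S j0, rfl⟩
    · exact ⟨copyV S j0, rfl⟩
    · exact ⟨wV S, rfl⟩
    · exact ⟨xV S, rfl⟩
  · exact Set.eq_univ_iff_forall.mpr fun y => Set.mem_iUnion.mpr ⟨fB B y, rfl⟩
  · intro h
    fin_cases h
    · refine induce_connected_hub (vV S) rfl (fun y hy => ?_)
      have hy' := fB_cases0 hy; subst hy'
      exact SimpleGraph.Reachable.refl _
    · refine induce_connected_hub (u1V S) rfl (fun y hy => ?_)
      have hy' := fB_cases1 hy; subst hy'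
      exact SimpleGraph.Reachable.refl _
    · refine induce_connected_hub (hypV S jl) rfl (fun y hy => ?_)
      have reachE : ∀ {i : Fin m} (hiB : i ∈ B),
          (((GQS' S).deleteEdges {s(vV S, xV S)}).induce {y | fB B y = 2}).Reachable
            ⟨eltV S i, mE hiB⟩ ⟨hypV S jl, rfl⟩ := fun {i} hiB =>
        (rs2 (mE hiB) (mS (hmemlast i) hiB) (e_subelt (hmemlast i)).symm).trans
          (rs2 (mS (hmemlast i) hiB) (show fB B (hypV S jl) = 2 from rfl) (e_subhyp (hmemlast i)))
      rcases fB_cases2 hy with ⟨j, rfl⟩ | ⟨i, hiB, rfl⟩ | ⟨i, j, hij, hiB, rfl⟩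
      · obtain ⟨i, hij, hiB⟩ := (hB j).1
        exact ((rs2 (show fB B (hypV S j) = 2 from rfl) (mS hij hiB) (e_subhyp hij).symm).trans
          ((rs2 (mS hij hiB) (mE hiB) (e_subelt hij)).trans (reachE hiB)))
      · exact reachE hiB
      · exact (rs2 (mS hij hiB) (mE hiB) (e_subelt hij)).trans (reachE hiB)
    · refine induce_connected_hub (copyV S jl) rfl (fun y hy => ?_)
      have reachE' : ∀ {i : Fin m} (hiB : i ∉ B),
          (((GQS' S).deleteEdges {s(vV S, xV S)}).induce {y | fB B y = 3}).Reachable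
            ⟨eltV S i, mE' hiB⟩ ⟨copyV S jl, rfl⟩ := fun {i} hiB =>
        rs3 (mE' hiB) (show fB B (copyV S jl) = 3 from rfl) (e_eltcopy (hmemlast i))
      rcases fB_cases3 hy with ⟨j, rfl⟩ | ⟨i, hiB, rfl⟩ | ⟨i, j, hij, hiB, rfl⟩
      · obtain ⟨i, hij, hiB⟩ := (hB j).2
        exact (rs3 (show fB B (copyV S j) = 3 from rfl) (mE' hiB) (e_eltcopy hij).symm).trans (reachE' hiB)
      · exact reachE' hiB
      · exact (rs3 (mS' hij hiB) (mE' hiB) (e_subelt hij)).trans (reachE' hiB)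
    · refine induce_connected_hub (wV S) rfl (fun y hy => ?_)
      have hy' := fB_cases4 hy; subst hy'
      exact SimpleGraph.Reachable.refl _
    · refine induce_connected_hub (xV S) rfl (fun y hy => ?_)
      have hy' := fB_cases5 hy; subst hy'
      exact SimpleGraph.Reachable.refl _
  · rintro ⟨a, ha, b, hb, hab⟩
    have ha' : fB B a = h1 := ha
    have hb' : fB B b = h2 := hb
    rcases keyAdj (B := B) hab with hp | hp
    · rwa [ha', hb'] at hp
    · exact absurd (ha'.symm.trans (hp.trans hb')) hne
  · intro hp
    fin_cases h1 <;> fin_cases h2 <;>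
      first
        | exact absurd hp (by rw [SimpleGraph.pathGraph_adj]; decide)
        | exact ⟨vV S, rfl, u1V S, rfl, e_u1v.symm⟩
        | exact ⟨u1V S, rfl, vV S, rfl, e_u1v⟩
        | exact ⟨u1V S, rfl, hypV S j0, rfl, e_u1hyp j0⟩
        | exact ⟨hypV S j0, rfl, u1V S, rfl, (e_u1hyp j0).symm⟩
        | exact ⟨hypV S j0, rfl, copyV S j0, rfl, e_hypcopy j0 j0⟩
        | exact ⟨copyV S j0, rfl, hypV S j0, rfl, (e_hypcopy j0 j0).symm⟩
        | exact ⟨copyV S j0, rfl, wV S, rfl, (e_wcopy j0).symm⟩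
        | exact ⟨wV S, rfl, copyV S j0, rfl, e_wcopy j0⟩
        | exact ⟨wV S, rfl, xV S, rfl, e_xw.symm⟩
        | exact ⟨xV S, rfl, wV S, rfl, e_xw⟩

end PartB

end Stmt18

theorem stmt_18 {m n : ℕ} (S : Fin n → Set (Fin m)) (hn : 2 ≤ n)
    (hSne : ∀ j, (S j).Nonempty) (hSlast : S ⟨n - 1, by omega⟩ = Set.univ)
    (h : ContainsAsContraction (GQS' S) (SimpleGraph.cycleGraph 6)) :
    ContainsAsContraction
      ((GQS' S).deleteEdges {s((⟨.v, trivial⟩ : GVertex' S), (⟨.x, trivial⟩ : GVertex' S))})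
      (SimpleGraph.pathGraph 6) := by
  classical
  obtain ⟨W, hW⟩ := h
  have hmem : ∀ y : GVertex' S, ∃ h6, y ∈ W h6 := fun y =>
    Set.mem_iUnion.mp (Set.eq_univ_iff_forall.mp hW.2.2.1 y)
  choose φ hφ using hmem
  obtain ⟨B, hB⟩ := Stmt18.coloring hn hSne hSlast hW hφ
  exact Stmt18.lemmaB hn hSne hSlast hB
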